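/- For every M > 0 there exists r₀ > 1 such that for all r > r₀ and all λ with 0 < λ < 1/r, the ratio of the TAGS lower bound λ·r to the SITA upper bound λ(√r - 1)²/(√r(1 - 1/r)²) exceeds M. -/
import Mathlib


theorem stmt19 :
    ∀ M : ℝ, 0 < M → ∃ r₀ : ℝ, 1 < r₀ ∧ ∀ r : ℝ, r₀ < r → ∀ lam : ℝ,
      0 < lam → lam < 1 / r →
      (lam * r) / (lam * (Real.sqrt r - 1)^2 / (Real.sqrt r * (1 - 1/r)^2)) > M := by
  intro M hM
  refine ⟨max 2 (M ^ 2 + 1), lt_of_lt_of_le one_lt_two (le_max_left _ _), ?_⟩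
  intro r hr lam hlam _
  have hr2 : (2 : ℝ) < r := lt_of_le_of_lt (le_max_left _ _) hr
  have hrM : M ^ 2 + 1 < r := lt_of_le_of_lt (le_max_right _ _) hr
  have hr0 : (0 : ℝ) < r := by linarith
  set s := Real.sqrt r with hs
  have hs2 : s ^ 2 = r := Real.sq_sqrt hr0.le
  have hs1 : 1 < s := by
    nlinarith [Real.sqrt_nonneg r]
  have hsM : M < s := by nlinarith
  have h1r : (0 : ℝ) < 1 - 1 / r := by
    rw [sub_pos, div_lt_one hr0]; linarith
  have key : (lam * r) / (lam * (s - 1)^2 / (s * (1 - 1/r)^2))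
      = (s + 1) ^ 2 / s := by
    have h2 : s ≠ 0 := by linarith
    have h3 : s - 1 ≠ 0 := by linarith
    have h4 : 1 - 1 / r ≠ 0 := ne_of_gt h1r
    rw [div_div_eq_mul_div, ← hs2]
    field_simp
    ring
  rw [key]
  have : s < (s + 1) ^ 2 / s := by
    rw [lt_div_iff₀ (by linarith)]
    nlinarith
  linarith
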